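/- arXiv:1805.03041 — 9 statements merged into one kernel-verified Lean document; each statement's English description precedes it below -/
import Mathlib

section
/- Let p : (E,κ) → (B,λ) be a (κ,λ)-continuous surjection between digital images with the unique path lifting property. If e, e' ∈ E are κ-adjacent, then p(e) ≠ p(e'). (Proposition 3.4(i)) -/
open Set

/-- 2-adjacency on `ℤ` (the `l₁`-adjacency on `ℤ`): `x` and `y` are distinct with `|x - y| = 1`. -/
def adj2 (x y : ℤ) : Prop := |x - y| = 1

/-- 8-adjacency on `ℤ²` (the `l₂`-adjacency on `ℤ²`). -/
def adj8 (p q : ℤ × ℤ) : Prop := p ≠ q ∧ |p.1 - q.1| ≤ 1 ∧ |p.2 - q.2| ≤ 1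

/-- 26-adjacency on `ℤ³` (the `l₃`-adjacency on `ℤ³`). -/
def adj26 (p q : ℤ × ℤ × ℤ) : Prop :=
  p ≠ q ∧ |p.1 - q.1| ≤ 1 ∧ |p.2.1 - q.2.1| ≤ 1 ∧ |p.2.2 - q.2.2| ≤ 1

/-- An adjacency relation (as any `l_u`-adjacency is) is symmetric and irreflexive. -/
def IsAdjacency {A : Type*} (κ : A → A → Prop) : Prop := Symmetric κ ∧ Irreflexive κ

/-- `f` is `(κ,λ)`-continuous on `X`: κ-adjacent points are mapped to equal or λ-adjacent
points. -/
def DigContOn {A B : Type*} (f : A → B) (X : Set A)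
    (κ : A → A → Prop) (lam : B → B → Prop) : Prop :=
  ∀ x₀ ∈ X, ∀ x₁ ∈ X, κ x₀ x₁ → f x₀ = f x₁ ∨ lam (f x₀) (f x₁)

/-- `f : [0,m]_ℤ → X` is a digital `κ`-path of length `m` in `X`,
i.e. a `(2,κ)`-continuous map on `[0,m]_ℤ` with values in `X`. -/
def IsDigPath {A : Type*} (X : Set A) (κ : A → A → Prop) (m : ℕ) (f : ℤ → A) : Prop :=
  (∀ i ∈ Icc (0 : ℤ) (m : ℤ), f i ∈ X) ∧
  ∀ i ∈ Icc (0 : ℤ) (m : ℤ), ∀ j ∈ Icc (0 : ℤ) (m : ℤ),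
    adj2 i j → f i = f j ∨ κ (f i) (f j)

/-- There is a digital `κ`-path of length `m` in `X` from `x` to `y`. -/
def ReachIn {A : Type*} (X : Set A) (κ : A → A → Prop) (x y : A) (m : ℕ) : Prop :=
  ∃ f : ℤ → A, IsDigPath X κ m f ∧ f 0 = x ∧ f (m : ℤ) = y

/-- `X` is `κ`-connected: every two of its points are joined by a `κ`-path in `X`. -/
def DigConnected {A : Type*} (X : Set A) (κ : A → A → Prop) : Prop :=
  ∀ x ∈ X, ∀ y ∈ X, ∃ m : ℕ, ReachIn X κ x y m

/-- The `κ`-neighborhood `N_κ(e₀, ε)` of `e₀` in `X` with radius `ε`: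
points of `X` whose shortest `κ`-path distance from `e₀` is at most `ε`, together with `e₀`. -/
def Nbhd {A : Type*} (X : Set A) (κ : A → A → Prop) (e₀ : A) (ε : ℕ) : Set A :=
  {e ∈ X | ∃ m : ℕ, m ≤ ε ∧ ReachIn X κ e₀ e m} ∪ {e₀}

/-- The restriction of `f` to `X` is a `(κ,λ)`-isomorphism onto `Y`: a `(κ,λ)`-continuous
bijection of `X` onto `Y` whose inverse is `(λ,κ)`-continuous. -/
def IsDigIsoOn {A B : Type*} (f : A → B) (X : Set A) (Y : Set B)
    (κ : A → A → Prop) (lam : B → B → Prop) : Prop :=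
  MapsTo f X Y ∧ InjOn f X ∧ SurjOn f X Y ∧ DigContOn f X κ lam ∧
  ∀ x₀ ∈ X, ∀ x₁ ∈ X, lam (f x₀) (f x₁) → x₀ = x₁ ∨ κ x₀ x₁

/-- `p` is a radius-`n` digital `(κ,λ)`-covering map of `E` onto `Bs`
(`n = 1` gives the usual digital `(κ,λ)`-covering map): a `(κ,λ)`-continuous surjection
such that for each `b ∈ Bs` there is a set `F` of points of the fiber over `b` whose radius-`n`
neighborhoods are pairwise disjoint, partition `p⁻¹(N_λ(b,n))`, and are each mapped
isomorphically onto `N_λ(b,n)` by `p`. -/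
def IsRadiusCovering {A B : Type*} (p : A → B) (E : Set A) (Bs : Set B)
    (κ : A → A → Prop) (lam : B → B → Prop) (n : ℕ) : Prop :=
  MapsTo p E Bs ∧ SurjOn p E Bs ∧ DigContOn p E κ lam ∧
  ∀ b ∈ Bs, ∃ F : Set A, F ⊆ {e ∈ E | p e = b} ∧
    (E ∩ p ⁻¹' (Nbhd Bs lam b n) = ⋃ e ∈ F, Nbhd E κ e n) ∧
    F.Pairwise (fun e e' => Disjoint (Nbhd E κ e n) (Nbhd E κ e' n)) ∧
    ∀ e ∈ F, IsDigIsoOn p (Nbhd E κ e n) (Nbhd Bs lam b n) κ lam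

/-- `p` is a radius-`n` local `(κ,λ)`-isomorphism (`n = 1` gives the usual local
`(κ,λ)`-isomorphism): for every `e ∈ E` the restriction of `p` to `N_κ(e,n)` is a
`(κ,λ)`-isomorphism onto `N_λ(p e, n)`. -/
def IsLocalIso {A B : Type*} (p : A → B) (E : Set A) (Bs : Set B)
    (κ : A → A → Prop) (lam : B → B → Prop) (n : ℕ) : Prop :=
  ∀ e ∈ E, IsDigIsoOn p (Nbhd E κ e n) (Nbhd Bs lam (p e) n) κ lam

/-- `p` has the digital path lifting property: every `λ`-path `a` in `Bs` and every point
`e ∈ E` of the fiber over `a 0` admit a lifting of `a` beginning at `e`. -/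
def PathLiftingProp {A B : Type*} (p : A → B) (E : Set A) (Bs : Set B)
    (κ : A → A → Prop) (lam : B → B → Prop) : Prop :=
  ∀ (m : ℕ) (a : ℤ → B), IsDigPath Bs lam m a → ∀ e ∈ E, p e = a 0 →
    ∃ g : ℤ → A, IsDigPath E κ m g ∧ (∀ i ∈ Icc (0 : ℤ) (m : ℤ), p (g i) = a i) ∧ g 0 = e

/-- `p` has the uniqueness of digital path lifts property: two `κ`-paths in `E` with the
same projection and the same starting point coincide (on their domain `[0,m]_ℤ`). -/
def UniqLiftsProp {A B : Type*} (p : A → B) (E : Set A) (κ : A → A → Prop) : Prop :=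
  ∀ (m : ℕ) (a b : ℤ → A), IsDigPath E κ m a → IsDigPath E κ m b →
    (∀ i ∈ Icc (0 : ℤ) (m : ℤ), p (a i) = p (b i)) → a 0 = b 0 →
    EqOn a b (Icc (0 : ℤ) (m : ℤ))

/-- `p` has the unique path lifting property (u.p.l.): both the path lifting property and
the uniqueness of path lifts property. -/
def UPL {A B : Type*} (p : A → B) (E : Set A) (Bs : Set B)
    (κ : A → A → Prop) (lam : B → B → Prop) : Prop :=
  PathLiftingProp p E Bs κ lam ∧ UniqLiftsProp p E κ

/-- `e` is a conciliator point for `p`: there are `e', e'' ∈ N_κ(e,1)` which are not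
`κ`-adjacent but whose images are `λ`-adjacent. -/
def IsConciliator {A B : Type*} (p : A → B) (E : Set A)
    (κ : A → A → Prop) (lam : B → B → Prop) (e : A) : Prop :=
  ∃ e' ∈ Nbhd E κ e 1, ∃ e'' ∈ Nbhd E κ e 1, ¬ κ e' e'' ∧ lam (p e') (p e'')

/-- `f : [0,m]_ℤ → X` is a simple `κ`-loop of length `m` in `X`: a closed `κ`-path such that
`f 0, …, f (m-1)` are pairwise distinct and `f i`, `f j` are `κ`-adjacent iff
`j = i ± 1 (mod m)`. -/
def IsSimpleLoop {A : Type*} (X : Set A) (κ : A → A → Prop) (m : ℕ) (f : ℤ → A) : Prop :=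
  IsDigPath X κ m f ∧ f 0 = f (m : ℤ) ∧
  (∀ i ∈ Ico (0 : ℤ) (m : ℤ), ∀ j ∈ Ico (0 : ℤ) (m : ℤ), f i = f j → i = j) ∧
  ∀ i ∈ Ico (0 : ℤ) (m : ℤ), ∀ j ∈ Ico (0 : ℤ) (m : ℤ),
    (κ (f i) (f j) ↔ (j % (m : ℤ) = (i + 1) % (m : ℤ) ∨ j % (m : ℤ) = (i - 1) % (m : ℤ)))

/-- Proposition 3.4(i): if `p` is a `(κ,λ)`-continuous surjection between digital images
with the unique path lifting property and `e`, `e'` are `κ`-adjacent, then `p e ≠ p e'`. -/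
theorem prop_3_4_i {N M : ℕ} (E : Set (Fin N → ℤ)) (Bs : Set (Fin M → ℤ))
    (κ : (Fin N → ℤ) → (Fin N → ℤ) → Prop) (lam : (Fin M → ℤ) → (Fin M → ℤ) → Prop)
    (hκ : IsAdjacency κ) (hlam : IsAdjacency lam)
    (p : (Fin N → ℤ) → (Fin M → ℤ))
    (hmaps : Set.MapsTo p E Bs) (hsurj : Set.SurjOn p E Bs)
    (hcont : DigContOn p E κ lam) (hupl : UPL p E Bs κ lam)
    (e e' : Fin N → ℤ) (he : e ∈ E) (he' : e' ∈ E) (hadj : κ e e') :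
    p e ≠ p e' := by
  intro hpe
  have hne : e ≠ e' := fun h => hκ.2 e (h ▸ hadj)
  set a : ℤ → (Fin N → ℤ) := fun i => if i ≤ 0 then e else e' with ha
  set b : ℤ → (Fin N → ℤ) := fun _ => e with hb
  have hpa : IsDigPath E κ 1 a := by
    constructor
    · intro i _
      by_cases h : i ≤ 0 <;> simp [ha, h, he, he']
    · intro i hi j hj hij
      by_cases h1 : i ≤ 0 <;> by_cases h2 : j ≤ 0 <;> simp [ha, h1, h2]
      · exact Or.inr hadj
      · exact Or.inr (hκ.1 hadj)
  have hpb : IsDigPath E κ 1 b := by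
    constructor
    · intro i _; simpa [hb] using he
    · intro i _ j _ _; simp [hb]
  have heq := hupl.2 1 a b hpa hpb (by
    intro i hi
    simp only [Icc, Nat.cast_one] at hi
    by_cases h : i ≤ 0 <;> simp [ha, hb, h, hpe]) (by simp [ha, hb])
  have : a 1 = b 1 := heq (by simp)
  simp [ha, hb] at this
  exact hne this.symm
end

section
/- Let p : (E,κ) → (B,λ) be a (κ,λ)-continuous surjection between digital images with the unique path lifting property. If e, e', e'' ∈ E are such that e is κ-adjacent to e', e is κ-adjacent to e'', and e' ≠ e'', then p(e') ≠ p(e''). (Proposition 3.4(ii)) -/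
open Set

/-- Proposition 3.4(ii): if `p` is a `(κ,λ)`-continuous surjection between digital images
with the unique path lifting property, `e` is `κ`-adjacent to both `e'` and `e''`, and
`e' ≠ e''`, then `p e' ≠ p e''`. -/
theorem prop_3_4_ii {N M : ℕ} (E : Set (Fin N → ℤ)) (Bs : Set (Fin M → ℤ))
    (κ : (Fin N → ℤ) → (Fin N → ℤ) → Prop) (lam : (Fin M → ℤ) → (Fin M → ℤ) → Prop)
    (hκ : IsAdjacency κ) (hlam : IsAdjacency lam)
    (p : (Fin N → ℤ) → (Fin M → ℤ))
    (hmaps : Set.MapsTo p E Bs) (hsurj : Set.SurjOn p E Bs)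
    (hcont : DigContOn p E κ lam) (hupl : UPL p E Bs κ lam)
    (e e' e'' : Fin N → ℤ) (he : e ∈ E) (he' : e' ∈ E) (he'' : e'' ∈ E)
    (hadj' : κ e e') (hadj'' : κ e e'') (hne : e' ≠ e'') :
    p e' ≠ p e'' := by
  intro hpe
  apply hne
  have hpath : ∀ x : Fin N → ℤ, x ∈ E → κ e x →
      IsDigPath E κ 1 (fun i => if i ≤ 0 then e else x) := by
    intro x hx hax
    constructor
    · intro i hi; by_cases h : i ≤ 0 <;> simp [h, he, hx]
    · intro i hi j hj hij
      by_cases h1 : i ≤ 0 <;> by_cases h2 : j ≤ 0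
      · left; simp [h1, h2]
      · right; simpa [h1, h2] using hax
      · right; simpa [h1, h2] using hκ.1 hax
      · left; simp [h1, h2]
  have key := hupl.2 1 (fun i => if i ≤ 0 then e else e') (fun i => if i ≤ 0 then e else e'')
    (hpath e' he' hadj') (hpath e'' he'' hadj'') ?_ ?_
  · have h1 := key (show (1:ℤ) ∈ Icc (0:ℤ) ((1:ℕ):ℤ) by simp)
    simpa using h1
  · intro i hi; by_cases h : i ≤ 0 <;> simp [h, hpe]
  · simp
end

section
/- Let p : (E,κ) → (B,λ) be a (κ,λ)-continuous surjection between digital images with the unique path lifting property. If e, e' ∈ E are such that p(e) and p(e') are λ-adjacent, then there is a unique element e'' ∈ p⁻¹(p(e')) such that e is κ-adjacent to e''. (Proposition 3.4(iii)) -/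
open Set

/-- A length-1 step path. -/
private lemma step_path {A : Type*} (X : Set A) (κ : A → A → Prop) (hκ : Symmetric κ)
    (x y : A) (hx : x ∈ X) (hy : y ∈ X) (h : x = y ∨ κ x y) :
    IsDigPath X κ 1 (fun i => if i = 0 then x else y) := by
  constructor
  · intro i hi
    simp only [Set.mem_Icc, Nat.cast_one] at hi
    by_cases h0 : i = 0 <;> simp [h0, hx, hy]
  · intro i hi j hj hij
    simp only [Set.mem_Icc, Nat.cast_one] at hi hj
    obtain ⟨hi1, hi2⟩ := hi
    obtain ⟨hj1, hj2⟩ := hj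
    have hne : i ≠ j := by
      intro h; rw [h] at hij; simp [adj2] at hij
    interval_cases i <;> interval_cases j <;> simp_all [adj2]
    · rcases h with h | h
      · left; exact h.symm
      · right; exact hκ h

/-- Proposition 3.4(iii): if `p` is a `(κ,λ)`-continuous surjection between digital images
with the unique path lifting property and `p e`, `p e'` are `λ`-adjacent, then there is a
unique `e'' ∈ p⁻¹(p e')` with `e` `κ`-adjacent to `e''`. -/
theorem prop_3_4_iii {N M : ℕ} (E : Set (Fin N → ℤ)) (Bs : Set (Fin M → ℤ))
    (κ : (Fin N → ℤ) → (Fin N → ℤ) → Prop) (lam : (Fin M → ℤ) → (Fin M → ℤ) → Prop)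
    (hκ : IsAdjacency κ) (hlam : IsAdjacency lam)
    (p : (Fin N → ℤ) → (Fin M → ℤ))
    (hmaps : Set.MapsTo p E Bs) (hsurj : Set.SurjOn p E Bs)
    (hcont : DigContOn p E κ lam) (hupl : UPL p E Bs κ lam)
    (e e' : Fin N → ℤ) (he : e ∈ E) (he' : e' ∈ E) (hladj : lam (p e) (p e')) :
    ∃! e'' : Fin N → ℤ, e'' ∈ E ∧ p e'' = p e' ∧ κ e e'' := by
  obtain ⟨hlift, huniq⟩ := hupl
  set a : ℤ → (Fin M → ℤ) := fun i => if i = 0 then p e else p e' with ha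
  have hpath : IsDigPath Bs lam 1 a :=
    step_path Bs lam hlam.1 _ _ (hmaps he) (hmaps he') (Or.inr hladj)
  obtain ⟨g, hg, hgp, hg0⟩ := hlift 1 a hpath e he (by simp [ha])
  have h1mem : (1 : ℤ) ∈ Icc (0 : ℤ) ((1 : ℕ) : ℤ) := by simp
  have h0mem : (0 : ℤ) ∈ Icc (0 : ℤ) ((1 : ℕ) : ℤ) := by simp
  have hg1E : g 1 ∈ E := hg.1 1 h1mem
  have hpg1 : p (g 1) = p e' := by
    have := hgp 1 h1mem; simpa [ha] using this
  have hne : p e ≠ p e' := fun h => hlam.2 (p e') (h ▸ hladj)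
  have hadj : κ e (g 1) := by
    rcases hg.2 0 h0mem 1 h1mem (by simp [adj2]) with h | h
    · exfalso; apply hne; rw [← hg0, h, hpg1]
    · rwa [hg0] at h
  refine ⟨g 1, ⟨hg1E, hpg1, hadj⟩, ?_⟩
  rintro y ⟨hyE, hyp, hyadj⟩
  set α : ℤ → (Fin N → ℤ) := fun i => if i = 0 then e else y with hα
  have hαpath : IsDigPath E κ 1 α := step_path E κ hκ.1 _ _ he hyE (Or.inr hyadj)
  set β : ℤ → (Fin N → ℤ) := fun i => if i = 0 then e else g 1 with hβ
  have hβpath : IsDigPath E κ 1 β := step_path E κ hκ.1 _ _ he hg1E (Or.inr hadj)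
  have := huniq 1 α β hαpath hβpath ?_ (by simp [hα, hβ])
  · have h1 := this h1mem
    simpa [hα, hβ] using h1
  · intro i hi
    simp only [Set.mem_Icc, Nat.cast_one] at hi
    obtain ⟨hi1, hi2⟩ := hi
    interval_cases i <;> simp [hα, hβ, hyp, hpg1]
end

section
/- Let p : (E,κ) → (B,λ) be a (κ,λ)-continuous surjection between digital images with the unique path lifting property. If e ∈ E and b ∈ B are such that p(e) and b are λ-adjacent, then there is a unique element e' ∈ p⁻¹(b) such that e is κ-adjacent to e'. (Proposition 3.4(iv)) -/
open Set

/-- Proposition 3.4(iv): if `p` is a `(κ,λ)`-continuous surjection between digital images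
with the unique path lifting property and `p e`, `b` are `λ`-adjacent, then there is a
unique `e' ∈ p⁻¹(b)` with `e` `κ`-adjacent to `e'`. -/
theorem prop_3_4_iv {N M : ℕ} (E : Set (Fin N → ℤ)) (Bs : Set (Fin M → ℤ))
    (κ : (Fin N → ℤ) → (Fin N → ℤ) → Prop) (lam : (Fin M → ℤ) → (Fin M → ℤ) → Prop)
    (hκ : IsAdjacency κ) (hlam : IsAdjacency lam)
    (p : (Fin N → ℤ) → (Fin M → ℤ))
    (hmaps : Set.MapsTo p E Bs) (hsurj : Set.SurjOn p E Bs)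
    (hcont : DigContOn p E κ lam) (hupl : UPL p E Bs κ lam)
    (e : Fin N → ℤ) (b : Fin M → ℤ) (he : e ∈ E) (hb : b ∈ Bs)
    (hladj : lam (p e) b) :
    ∃! e' : Fin N → ℤ, e' ∈ E ∧ p e' = b ∧ κ e e' := by
  -- the path of length 1 from `p e` to `b`
  set a : ℤ → (Fin M → ℤ) := fun i => if i ≤ 0 then p e else b with ha
  have hpath : IsDigPath Bs lam 1 a := by
    constructor
    · intro i _
      by_cases h : i ≤ 0 <;> simp [ha, h, hmaps he, hb]
    · intro i hi j hj hij
      simp only [mem_Icc] at hi hj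
      have : (i = 0 ∧ j = 1) ∨ (i = 1 ∧ j = 0) := by
        unfold adj2 at hij
        rcases abs_eq (by norm_num : (0:ℤ) ≤ 1) |>.mp hij with h | h <;> omega
      rcases this with ⟨hi0, hj1⟩ | ⟨hi1, hj0⟩
      · right; simp [ha, hi0, hj1, hladj]
      · right; simp [ha, hi1, hj0]; exact hlam.1 hladj
  obtain ⟨g, hg, hpg, hg0⟩ := hupl.1 1 a hpath e he (by simp [ha])
  have hg1E : g 1 ∈ E := hg.1 1 (by simp)
  have hpg1 : p (g 1) = b := by
    have := hpg 1 (by simp)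
    simpa [ha] using this
  have hadj01 : adj2 (0 : ℤ) 1 := by unfold adj2; norm_num
  have hκe : κ e (g 1) := by
    rcases hg.2 0 (by simp) 1 (by simp) hadj01 with h | h
    · exfalso
      rw [hg0] at h
      rw [← h] at hpg1
      exact hlam.2 _ (hpg1 ▸ hladj)
    · rwa [hg0] at h
  refine ⟨g 1, ⟨hg1E, hpg1, hκe⟩, ?_⟩
  rintro y ⟨hyE, hpy, hκy⟩
  -- uniqueness: two lifts of the same path starting at e
  set f₁ : ℤ → (Fin N → ℤ) := fun i => if i ≤ 0 then e else y with hf₁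
  set f₂ : ℤ → (Fin N → ℤ) := fun i => if i ≤ 0 then e else g 1 with hf₂
  have mk_path : ∀ (z : Fin N → ℤ), z ∈ E → κ e z →
      IsDigPath E κ 1 (fun i => if i ≤ 0 then e else z) := by
    intro z hz hκz
    constructor
    · intro i _; by_cases h : i ≤ 0 <;> simp [h, he, hz]
    · intro i hi j hj hij
      simp only [mem_Icc] at hi hj
      have : (i = 0 ∧ j = 1) ∨ (i = 1 ∧ j = 0) := by
        unfold adj2 at hij
        rcases abs_eq (by norm_num : (0:ℤ) ≤ 1) |>.mp hij with h | h <;> omega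
      rcases this with ⟨hi0, hj1⟩ | ⟨hi1, hj0⟩
      · right; simp [hi0, hj1, hκz]
      · right; simp [hi1, hj0]; exact hκ.1 hκz
  have h1 := mk_path y hyE hκy
  have h2 := mk_path (g 1) hg1E hκe
  have heq := hupl.2 1 f₁ f₂ h1 h2 ?_ (by simp [hf₁, hf₂])
  · have := heq (by simp : (1:ℤ) ∈ Icc (0:ℤ) ((1:ℕ):ℤ))
    simpa [hf₁, hf₂] using this
  · intro i hi
    simp only [mem_Icc] at hi
    by_cases h : i ≤ 0 <;> simp [hf₁, hf₂, h, hpy, hpg1]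
end

section
/- Let p : (E,κ) → (B,λ) be a (κ,λ)-continuous surjection between digital images with the unique path lifting property. If b, b' ∈ B are λ-adjacent, then for every e ∈ p⁻¹(b) there is a unique element e' ∈ p⁻¹(b') such that e is κ-adjacent to e'. (Proposition 3.4(v)) -/
open Set

/-- Proposition 3.4(v): if `p` is a `(κ,λ)`-continuous surjection between digital images
with the unique path lifting property and `b`, `b'` are `λ`-adjacent, then for every
`e ∈ p⁻¹(b)` there is a unique `e' ∈ p⁻¹(b')` with `e` `κ`-adjacent to `e'`. -/
theorem prop_3_4_v {N M : ℕ} (E : Set (Fin N → ℤ)) (Bs : Set (Fin M → ℤ))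
    (κ : (Fin N → ℤ) → (Fin N → ℤ) → Prop) (lam : (Fin M → ℤ) → (Fin M → ℤ) → Prop)
    (hκ : IsAdjacency κ) (hlam : IsAdjacency lam)
    (p : (Fin N → ℤ) → (Fin M → ℤ))
    (hmaps : Set.MapsTo p E Bs) (hsurj : Set.SurjOn p E Bs)
    (hcont : DigContOn p E κ lam) (hupl : UPL p E Bs κ lam)
    (b b' : Fin M → ℤ) (hb : b ∈ Bs) (hb' : b' ∈ Bs) (hladj : lam b b') :
    ∀ e ∈ E, p e = b → ∃! e' : Fin N → ℤ, e' ∈ E ∧ p e' = b' ∧ κ e e' := by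
  intro e he hpe
  have h1 : (1:ℤ) ∈ Icc (0:ℤ) ((1:ℕ):ℤ) := by simp
  have h0 : (0:ℤ) ∈ Icc (0:ℤ) ((1:ℕ):ℤ) := by simp
  have hmem : ∀ i ∈ Icc (0:ℤ) ((1:ℕ):ℤ), i = 0 ∨ i = 1 := by
    intro i hi; simp only [Set.mem_Icc, Nat.cast_one] at hi; omega
  set a : ℤ → (Fin M → ℤ) := fun i => if i ≤ 0 then b else b' with ha
  have hpath : IsDigPath Bs lam 1 a := by
    constructor
    · intro i hi
      rcases hmem i hi with rfl | rfl <;> simp [ha, hb, hb']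
    · intro i hi j hj hadj
      rcases hmem i hi with rfl | rfl <;> rcases hmem j hj with rfl | rfl <;>
        simp only [adj2] at hadj <;> simp [ha] <;> first
        | exact Or.inr hladj
        | exact Or.inr (hlam.1 hladj)
        | omega
  obtain ⟨g, hg, hpg, hg0⟩ := hupl.1 1 a hpath e he (by simp [ha, hpe])
  have hpg0 : p (g 0) = b := by simpa [ha] using hpg 0 h0
  have hpg1 : p (g 1) = b' := by simpa [ha] using hpg 1 h1
  have hg1E : g 1 ∈ E := hg.1 1 h1
  have hadj : κ (g 0) (g 1) := by
    rcases hg.2 0 h0 1 h1 (by simp [adj2]) with h | h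
    · exfalso
      have hbb : b = b' := by rw [← hpg0, ← hpg1, h]
      exact hlam.2 b (hbb ▸ hladj)
    · exact h
  refine ⟨g 1, ⟨hg1E, hpg1, hg0 ▸ hadj⟩, ?_⟩
  intro e' ⟨he'E, hpe', hke'⟩
  set β : ℤ → (Fin N → ℤ) := fun i => if i ≤ 0 then e else e' with hβ
  have hβpath : IsDigPath E κ 1 β := by
    constructor
    · intro i hi
      rcases hmem i hi with rfl | rfl <;> simp [hβ, he, he'E]
    · intro i hi j hj hadj
      rcases hmem i hi with rfl | rfl <;> rcases hmem j hj with rfl | rfl <;>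
        simp only [adj2] at hadj <;> simp [hβ] <;> first
        | exact Or.inr hke'
        | exact Or.inr (hκ.1 hke')
        | omega
  have heq := hupl.2 1 β g hβpath hg ?_ ?_
  · have := heq h1
    simpa [hβ] using this
  · intro i hi
    rcases hmem i hi with rfl | rfl
    · simp [hβ, hpe, hpg0]
    · simp [hβ, hpe', hpg1]
  · simp [hβ, hg0]
end

section
/- Let (E,κ) and (B,λ) be connected digital images. If a (κ,λ)-continuous surjection p : (E,κ) → (B,λ) has the unique path lifting property and has no conciliator point, then p is a digital (κ,λ)-covering map. (Theorem 3.6) -/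
open Set

section Helpers

variable {A B : Type*} {X E : Set A} {Bs : Set B} {κ : A → A → Prop} {lam : B → B → Prop}
  {p : A → B}

lemma isDigPath_pair (hsym : Symmetric κ) {e x : A} (he : e ∈ X) (hx : x ∈ X)
    (h : e = x ∨ κ e x) : IsDigPath X κ 1 (fun i => if i = 0 then e else x) := by
  constructor
  · intro i hi
    simp only [mem_Icc, Nat.cast_one] at hi
    have : i = 0 ∨ i = 1 := by omega
    rcases this with rfl | rfl <;> simp [he, hx]
  · intro i hi j hj hij
    simp only [mem_Icc, Nat.cast_one] at hi hj
    unfold adj2 at hij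
    rw [abs_eq (by norm_num : (0:ℤ) ≤ 1)] at hij
    have : (i = 0 ∧ j = 1) ∨ (i = 1 ∧ j = 0) := by omega
    rcases this with ⟨rfl, rfl⟩ | ⟨rfl, rfl⟩ <;> simp
    · exact h
    · rcases h with h | h
      · exact Or.inl h.symm
      · exact Or.inr (hsym h)

lemma mem_nbhd_one (hsym : Symmetric κ) {e : A} (he : e ∈ X) {x : A} :
    x ∈ Nbhd X κ e 1 ↔ x = e ∨ (x ∈ X ∧ κ e x) := by
  constructor
  · rintro (⟨hxX, m, hm, f, ⟨hmem, hadj⟩, hf0, hfm⟩ | hx)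
    · interval_cases m
      · left
        simpa using (hfm.symm.trans hf0)
      · have h01 : adj2 (0:ℤ) 1 := by unfold adj2; norm_num
        have hmem0 : (0:ℤ) ∈ Icc (0:ℤ) ((1:ℕ):ℤ) := by simp
        have hmem1 : (1:ℤ) ∈ Icc (0:ℤ) ((1:ℕ):ℤ) := by simp
        have hf1 : f 1 = x := by simpa using hfm
        rcases hadj 0 hmem0 1 hmem1 h01 with h | h
        · left; rw [← hf1, ← h, hf0]
        · right; exact ⟨hxX, by rwa [hf0, hf1] at h⟩
    · left; simpa using hx
  · rintro (rfl | ⟨hxX, hk⟩)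
    · right; rfl
    · left
      refine ⟨hxX, 1, le_refl 1, fun i => if i = 0 then e else x,
        isDigPath_pair hsym he hxX (Or.inr hk), by simp, by simp⟩

lemma nbhd_one_subset (hsym : Symmetric κ) {e : A} (he : e ∈ X) :
    Nbhd X κ e 1 ⊆ X := by
  intro x hx
  rcases (mem_nbhd_one hsym he).mp hx with rfl | ⟨hxX, _⟩
  · exact he
  · exact hxX

lemma fiber_eq (hsym : Symmetric κ) (hu : UniqLiftsProp p E κ) {c x₁ x₂ : A}
    (hc : c ∈ E) (h1 : x₁ ∈ E) (h2 : x₂ ∈ E) (hp : p x₁ = p x₂)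
    (ha1 : c = x₁ ∨ κ c x₁) (ha2 : c = x₂ ∨ κ c x₂) : x₁ = x₂ := by
  have e1 := hu 1 (fun i => if i = 0 then c else x₁) (fun i => if i = 0 then c else x₂)
    (isDigPath_pair hsym hc h1 ha1) (isDigPath_pair hsym hc h2 ha2)
    (by
      intro i hi
      by_cases h : i = 0 <;> simp [h, hp]) (by simp)
  have := e1 (show (1:ℤ) ∈ Icc (0:ℤ) ((1:ℕ):ℤ) by simp)
  simpa using this

lemma adj_lift (hlamsym : Symmetric lam) (hlamirr : Irreflexive lam)
    (hmaps : MapsTo p E Bs) (hlift : PathLiftingProp p E Bs κ lam)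
    {e : A} {y : B} (he : e ∈ E) (hy : y ∈ Bs) (hl : lam (p e) y) :
    ∃ x ∈ E, κ e x ∧ p x = y := by
  have hpath : IsDigPath Bs lam 1 (fun i => if i = 0 then p e else y) :=
    isDigPath_pair hlamsym (hmaps he) hy (Or.inr hl)
  obtain ⟨g, hg, hpg, hg0⟩ := hlift 1 _ hpath e he (by simp)
  have h0mem : (0:ℤ) ∈ Icc (0:ℤ) ((1:ℕ):ℤ) := by simp
  have h1mem : (1:ℤ) ∈ Icc (0:ℤ) ((1:ℕ):ℤ) := by simp
  have hpg1 : p (g 1) = y := by simpa using hpg 1 h1mem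
  have hadj := hg.2 0 h0mem 1 h1mem (by unfold adj2; norm_num)
  rcases hadj with h | h
  · exfalso
    have : p e = y := by rw [← hg0, h, hpg1]
    rw [this] at hl
    exact hlamirr y hl
  · refine ⟨g 1, hg.1 1 h1mem, ?_, hpg1⟩
    rw [← hg0]; exact h

end Helpers

/-- Theorem 3.6: a `(κ,λ)`-continuous surjection between connected digital images with the
unique path lifting property and no conciliator point is a digital `(κ,λ)`-covering map. -/
theorem thm_3_6 {N M : ℕ} (E : Set (Fin N → ℤ)) (Bs : Set (Fin M → ℤ))
    (κ : (Fin N → ℤ) → (Fin N → ℤ) → Prop) (lam : (Fin M → ℤ) → (Fin M → ℤ) → Prop)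
    (hκ : IsAdjacency κ) (hlam : IsAdjacency lam)
    (hconnE : DigConnected E κ) (hconnB : DigConnected Bs lam)
    (p : (Fin N → ℤ) → (Fin M → ℤ))
    (hmaps : Set.MapsTo p E Bs) (hsurj : Set.SurjOn p E Bs)
    (hcont : DigContOn p E κ lam) (hupl : UPL p E Bs κ lam)
    (hnc : ∀ e ∈ E, ¬ IsConciliator p E κ lam e) :
    IsRadiusCovering p E Bs κ lam 1 := by
  obtain ⟨hκsym, hκirr⟩ := hκ
  obtain ⟨hlamsym, hlamirr⟩ := hlam
  obtain ⟨hlift, huniq⟩ := hupl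
  refine ⟨hmaps, hsurj, hcont, ?_⟩
  intro b hb
  refine ⟨{e ∈ E | p e = b}, fun e he => he, ?_, ?_, ?_⟩
  · -- union equality
    ext x
    simp only [mem_inter_iff, mem_preimage, mem_iUnion, mem_setOf_eq]
    constructor
    · rintro ⟨hxE, hpx⟩
      rcases (mem_nbhd_one hlamsym hb).mp hpx with hpx | ⟨hpxB, hl⟩
      · exact ⟨x, ⟨hxE, hpx⟩, (mem_nbhd_one hκsym hxE).mpr (Or.inl rfl)⟩
      · obtain ⟨e, heE, hke, hpe⟩ :=
          adj_lift hlamsym hlamirr hmaps hlift hxE hb (hlamsym hl)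
        exact ⟨e, ⟨heE, hpe⟩,
          (mem_nbhd_one hκsym heE).mpr (Or.inr ⟨hxE, hκsym hke⟩)⟩
    · rintro ⟨e, ⟨heE, hpe⟩, hx⟩
      rcases (mem_nbhd_one hκsym heE).mp hx with rfl | ⟨hxE, hk⟩
      · exact ⟨heE, (mem_nbhd_one hlamsym hb).mpr (Or.inl hpe)⟩
      · refine ⟨hxE, ?_⟩
        rcases hcont e heE x hxE hk with h | h
        · exact (mem_nbhd_one hlamsym hb).mpr (Or.inl (h.symm.trans hpe))
        · rw [hpe] at h
          exact (mem_nbhd_one hlamsym hb).mpr (Or.inr ⟨hmaps hxE, h⟩)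
  · -- pairwise disjoint
    rintro e₁ ⟨he₁E, hpe₁⟩ e₂ ⟨he₂E, hpe₂⟩ hne
    rw [Set.disjoint_left]
    intro x hx₁ hx₂
    rcases (mem_nbhd_one hκsym he₁E).mp hx₁ with rfl | ⟨hxE, hk₁⟩
    · rcases (mem_nbhd_one hκsym he₂E).mp hx₂ with h | ⟨hxE, hk₂⟩
      · exact hne h
      · exact hne (fiber_eq hκsym huniq hxE he₁E he₂E (hpe₁.trans hpe₂.symm)
          (Or.inl rfl) (Or.inr (hκsym hk₂)))
    · rcases (mem_nbhd_one hκsym he₂E).mp hx₂ with h | ⟨_, hk₂⟩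
      · exact hne (fiber_eq hκsym huniq hxE he₁E he₂E (hpe₁.trans hpe₂.symm)
          (Or.inr (hκsym hk₁)) (Or.inl h))
      · exact hne (fiber_eq hκsym huniq hxE he₁E he₂E (hpe₁.trans hpe₂.symm)
          (Or.inr (hκsym hk₁)) (Or.inr (hκsym hk₂)))
  · -- local isomorphisms
    rintro e ⟨heE, hpe⟩
    refine ⟨?_, ?_, ?_, ?_, ?_⟩
    · -- MapsTo
      intro x hx
      rcases (mem_nbhd_one hκsym heE).mp hx with rfl | ⟨hxE, hk⟩
      · exact (mem_nbhd_one hlamsym hb).mpr (Or.inl hpe)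
      · rcases hcont e heE x hxE hk with h | h
        · exact (mem_nbhd_one hlamsym hb).mpr (Or.inl (h.symm.trans hpe))
        · rw [hpe] at h
          exact (mem_nbhd_one hlamsym hb).mpr (Or.inr ⟨hmaps hxE, h⟩)
    · -- InjOn
      intro x₁ hx₁ x₂ hx₂ hp
      have hx₁' := (mem_nbhd_one hκsym heE).mp hx₁
      have hx₂' := (mem_nbhd_one hκsym heE).mp hx₂
      have h1E : x₁ ∈ E := nbhd_one_subset hκsym heE hx₁
      have h2E : x₂ ∈ E := nbhd_one_subset hκsym heE hx₂
      refine fiber_eq hκsym huniq heE h1E h2E hp ?_ ?_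
      · rcases hx₁' with rfl | ⟨_, hk⟩
        · exact Or.inl rfl
        · exact Or.inr hk
      · rcases hx₂' with rfl | ⟨_, hk⟩
        · exact Or.inl rfl
        · exact Or.inr hk
    · -- SurjOn
      intro y hy
      rcases (mem_nbhd_one hlamsym hb).mp hy with rfl | ⟨hyB, hl⟩
      · exact ⟨e, (mem_nbhd_one hκsym heE).mpr (Or.inl rfl), hpe⟩
      · obtain ⟨x, hxE, hk, hpx⟩ :=
          adj_lift hlamsym hlamirr hmaps hlift heE hyB (by rwa [hpe])
        exact ⟨x, (mem_nbhd_one hκsym heE).mpr (Or.inr ⟨hxE, hk⟩), hpx⟩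
    · -- continuity
      intro x₀ hx₀ x₁ hx₁ hk
      exact hcont x₀ (nbhd_one_subset hκsym heE hx₀) x₁ (nbhd_one_subset hκsym heE hx₁) hk
    · -- reflects adjacency (no conciliator point)
      intro x₀ hx₀ x₁ hx₁ hl
      by_contra h
      push_neg at h
      exact hnc e heE ⟨x₀, hx₀, x₁, hx₁, h.2, hl⟩
end

section
/- Let (E,κ) and (B,λ) be connected digital images. A (κ,λ)-continuous surjection p : (E,κ) → (B,λ) is a digital (κ,λ)-covering map if and only if it is a local (κ,λ)-isomorphism. (Theorem 4.2) -/
open Set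

lemma reach_symm {A : Type*} {X : Set A} {κ : A → A → Prop} {x y : A} {m : ℕ}
    (h : ReachIn X κ x y m) : ReachIn X κ y x m := by
  obtain ⟨f, ⟨hmem, hadj⟩, h0, hm⟩ := h
  refine ⟨fun i => f ((m : ℤ) - i), ⟨?_, ?_⟩, by simpa using hm, by simpa using h0⟩
  · intro i hi
    simp only [mem_Icc] at hi ⊢
    exact hmem _ (by simp only [mem_Icc]; omega)
  · intro i hi j hj hij
    simp only [mem_Icc] at hi hj
    have h1 : adj2 ((m : ℤ) - i) ((m : ℤ) - j) := by
      unfold adj2 at hij ⊢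
      have : (m : ℤ) - i - ((m : ℤ) - j) = -(i - j) := by ring
      rw [this, abs_neg]; exact hij
    exact hadj _ (by simp only [mem_Icc]; omega) _ (by simp only [mem_Icc]; omega) h1

lemma nbhd_self {A : Type*} {X : Set A} {κ : A → A → Prop} (e : A) (ε : ℕ) :
    e ∈ Nbhd X κ e ε := Or.inr rfl

lemma nbhd_subset {A : Type*} {X : Set A} {κ : A → A → Prop} {e : A} {ε : ℕ}
    (he : e ∈ X) : Nbhd X κ e ε ⊆ X := by
  rintro z (⟨hz, _⟩ | hz)
  · exact hz
  · rcases hz; exact he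

lemma nbhd_symm {A : Type*} {X : Set A} {κ : A → A → Prop} {x e : A} {ε : ℕ}
    (hx : x ∈ X) (h : e ∈ Nbhd X κ x ε) : x ∈ Nbhd X κ e ε := by
  rcases h with ⟨heX, m, hm, hr⟩ | he
  · exact Or.inl ⟨hx, m, hm, reach_symm hr⟩
  · rcases he; exact Or.inr rfl

lemma mem_nbhd_of_adj {A : Type*} {X : Set A} {κ : A → A → Prop} (hsym : Symmetric κ)
    {x y : A} (hx : x ∈ X) (hy : y ∈ X) (h : κ x y) : y ∈ Nbhd X κ x 1 := by
  refine Or.inl ⟨hy, 1, le_refl 1, fun i => if i ≤ 0 then x else y, ⟨?_, ?_⟩, by norm_num,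
    by norm_num⟩
  · intro i _
    dsimp only
    split <;> assumption
  · intro i _ j _ _
    dsimp only
    split <;> split
    · exact Or.inl rfl
    · exact Or.inr h
    · exact Or.inr (hsym h)
    · exact Or.inl rfl

lemma nbhd_one_elim {A : Type*} {X : Set A} {κ : A → A → Prop} {x y : A}
    (h : y ∈ Nbhd X κ x 1) : y = x ∨ κ x y := by
  rcases h with ⟨_, m, hm, f, ⟨_, hadj⟩, h0, hm'⟩ | h
  · interval_cases m
    · left
      rw [← hm']; rw [← h0]; norm_num
    · have h01 : adj2 (0 : ℤ) 1 := by norm_num [adj2]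
      have := hadj 0 (by norm_num) 1 (by norm_num) h01
      rw [h0] at this
      have h1 : f ((1 : ℕ) : ℤ) = y := hm'
      norm_num at h1
      rw [h1] at this
      rcases this with h' | h'
      · exact Or.inl h'.symm
      · exact Or.inr h'
  · rcases h; exact Or.inl rfl

/-- Theorem 4.2: a `(κ,λ)`-continuous surjection between connected digital images is a
digital `(κ,λ)`-covering map if and only if it is a local `(κ,λ)`-isomorphism. -/
theorem thm_4_2 {N M : ℕ} (E : Set (Fin N → ℤ)) (Bs : Set (Fin M → ℤ))
    (κ : (Fin N → ℤ) → (Fin N → ℤ) → Prop) (lam : (Fin M → ℤ) → (Fin M → ℤ) → Prop)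
    (hκ : IsAdjacency κ) (hlam : IsAdjacency lam)
    (hconnE : DigConnected E κ) (hconnB : DigConnected Bs lam)
    (p : (Fin N → ℤ) → (Fin M → ℤ))
    (hmaps : Set.MapsTo p E Bs) (hsurj : Set.SurjOn p E Bs)
    (hcont : DigContOn p E κ lam) :
    IsRadiusCovering p E Bs κ lam 1 ↔ IsLocalIso p E Bs κ lam 1 := by
  constructor
  · rintro ⟨_, _, _, hcov⟩ e heE
    obtain ⟨F, hF, hunion, hdisj, hiso⟩ := hcov (p e) (hmaps heE)
    have hmemU : e ∈ ⋃ e' ∈ F, Nbhd E κ e' 1 := by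
      rw [← hunion]
      exact ⟨heE, Or.inr rfl⟩
    obtain ⟨e', he'F, hee'⟩ := Set.mem_iUnion₂.mp hmemU
    have hpe' : p e' = p e := (hF he'F).2
    have he'e : e = e' :=
      (hiso e' he'F).2.1 hee' (nbhd_self e' 1) hpe'.symm
    rw [he'e]
    rw [hpe']
    exact hiso e' he'F
  · intro hloc
    refine ⟨hmaps, hsurj, hcont, ?_⟩
    intro b hb
    refine ⟨{e ∈ E | p e = b}, Set.Subset.rfl, ?_, ?_, ?_⟩
    · ext x
      constructor
      · rintro ⟨hxE, hpx⟩
        rw [Set.mem_preimage] at hpx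
        obtain ⟨hmapsx, hinjx, hsurjx, -, -⟩ := hloc x hxE
        have hbmem : b ∈ Nbhd Bs lam (p x) 1 := by
          rcases nbhd_one_elim hpx with h | h
          · exact h ▸ Or.inr rfl
          · exact mem_nbhd_of_adj hlam.1 (hmaps hxE) hb (hlam.1 h)
        obtain ⟨e, heN, hpe⟩ := hsurjx hbmem
        have heE : e ∈ E := nbhd_subset hxE heN
        exact Set.mem_biUnion ⟨heE, hpe⟩ (nbhd_symm hxE heN)
      · intro hx
        obtain ⟨e, heF, hxe⟩ := Set.mem_iUnion₂.mp hx
        have heE : e ∈ E := heF.1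
        refine ⟨nbhd_subset heE hxe, ?_⟩
        rw [Set.mem_preimage, ← heF.2]
        exact (hloc e heE).1 hxe
    · intro e heF e' he'F hne
      rw [Set.disjoint_left]
      intro x hx hx'
      have hxE : x ∈ E := nbhd_subset heF.1 hx
      exact hne ((hloc x hxE).2.1 (nbhd_symm heF.1 hx) (nbhd_symm he'F.1 hx')
        (heF.2.trans he'F.2.symm))
    · rintro e ⟨heE, hpe⟩
      rw [← hpe]
      exact hloc e heE
end

section
/- Let p : (E,κ) → (B,λ) be a (κ,λ)-continuous surjection between digital images which is a local (κ,λ)-isomorphism. Then p has the digital path lifting property: every λ-path α : [0,m]_ℤ → B and every e₀ ∈ p⁻¹(α(0)) admit a lifting α̃ : [0,m]_ℤ → E with α̃(0) = e₀. (Claim proved inside Theorem 4.2) -/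
open Set

/-- Claim inside Theorem 4.2: a `(κ,λ)`-continuous surjection between digital images which
is a local `(κ,λ)`-isomorphism has the digital path lifting property. -/
theorem local_iso_path_lifting {N M : ℕ} (E : Set (Fin N → ℤ)) (Bs : Set (Fin M → ℤ))
    (κ : (Fin N → ℤ) → (Fin N → ℤ) → Prop) (lam : (Fin M → ℤ) → (Fin M → ℤ) → Prop)
    (hκ : IsAdjacency κ) (hlam : IsAdjacency lam)
    (p : (Fin N → ℤ) → (Fin M → ℤ))
    (hmaps : Set.MapsTo p E Bs) (hsurj : Set.SurjOn p E Bs)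
    (hcont : DigContOn p E κ lam)
    (hloc : IsLocalIso p E Bs κ lam 1) :
    PathLiftingProp p E Bs κ lam := by
  intro m a ha e heE he0
  suffices h : ∀ n : ℕ, n ≤ m → ∃ g : ℤ → (Fin N → ℤ), IsDigPath E κ n g ∧
      (∀ i ∈ Icc (0:ℤ) (n:ℤ), p (g i) = a i) ∧ g 0 = e by
    obtain ⟨g, hg1, hg2, hg3⟩ := h m le_rfl
    exact ⟨g, hg1, hg2, hg3⟩
  intro n hn
  induction n with
  | zero =>
    refine ⟨fun _ => e, ⟨fun i _ => heE, ?_⟩, ?_, rfl⟩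
    · intro i hi j hj hij
      simp only [mem_Icc, Nat.cast_zero] at hi hj
      have : i = j := by omega
      exact Or.inl (by rw [this])
    · intro i hi
      simp only [mem_Icc, Nat.cast_zero] at hi
      have : i = 0 := by omega
      rw [this, he0]
  | succ n ih =>
    obtain ⟨g, ⟨hgmem, hgadj⟩, hgp, hg0⟩ := ih (Nat.le_of_succ_le hn)
    have hnm : (n : ℤ) + 1 ≤ (m : ℤ) := by exact_mod_cast hn
    have hnI : (n:ℤ) ∈ Icc (0:ℤ) (m:ℤ) := ⟨by positivity, by omega⟩
    have hn1I : ((n:ℤ)+1) ∈ Icc (0:ℤ) (m:ℤ) := ⟨by positivity, hnm⟩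
    have hadjZ : adj2 (n:ℤ) ((n:ℤ)+1) := by simp [adj2]
    have hrel := ha.2 _ hnI _ hn1I hadjZ
    have hgnE : g n ∈ E := hgmem _ ⟨by positivity, le_refl _⟩
    have hpgn : p (g (n:ℤ)) = a (n:ℤ) := hgp _ ⟨by positivity, le_refl _⟩
    have hx : ∃ x, x ∈ E ∧ p x = a ((n:ℤ)+1) ∧ (x = g (n:ℤ) ∨ κ (g (n:ℤ)) x) := by
      rcases hrel with heq | hlam'
      · exact ⟨g (n:ℤ), hgnE, by rw [hpgn, ← heq], Or.inl rfl⟩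
      · have hbn : a (n:ℤ) ∈ Bs := ha.1 _ hnI
        have hbn1 : a ((n:ℤ)+1) ∈ Bs := ha.1 _ hn1I
        have hreach : a ((n:ℤ)+1) ∈ Nbhd Bs lam (a (n:ℤ)) 1 := by
          left
          refine ⟨hbn1, 1, le_refl 1,
            fun j => if j ≤ 0 then a (n:ℤ) else a ((n:ℤ)+1), ⟨?_, ?_⟩, by simp, by norm_num⟩
          · intro i hi
            by_cases hc : i ≤ 0 <;> simp [hc, hbn, hbn1]
          · intro i hi j hj hij
            simp only [mem_Icc, Nat.cast_one] at hi hj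
            rw [adj2, abs_eq (by norm_num : (0:ℤ) ≤ 1)] at hij
            have hij' : (i = 0 ∧ j = 1) ∨ (i = 1 ∧ j = 0) := by omega
            rcases hij' with ⟨hi0, hj1⟩ | ⟨hi1, hj0⟩
            · subst hi0; subst hj1; simp only [le_refl, if_true]
              norm_num
              exact Or.inr hlam'
            · subst hi1; subst hj0; simp only [le_refl, if_true]
              norm_num
              exact Or.inr (hlam.1 hlam')
        have hiso := hloc (g (n:ℤ)) hgnE
        rw [hpgn] at hiso
        obtain ⟨x, hxN, hpx⟩ := hiso.2.2.1 hreach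
        rcases hxN with ⟨hxE, mm, hmm, f, ⟨hfmem, hfadj⟩, hf0, hfm⟩ | hxe
        · refine ⟨x, hxE, hpx, ?_⟩
          interval_cases mm
          · left
            rw [← hfm]
            simpa using hf0
          · have hadj01 : adj2 (0:ℤ) 1 := by simp [adj2]
            have := hfadj 0 ⟨le_refl _, by norm_num⟩ 1 ⟨by norm_num, by norm_num⟩ hadj01
            rw [hf0] at this
            have hfm1 : f 1 = x := by exact_mod_cast hfm
            rw [hfm1] at this
            exact this.imp (fun h => h.symm) id
        · simp only [mem_singleton_iff] at hxe
          exact ⟨x, hxe ▸ hgnE, hpx, Or.inl hxe⟩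
    obtain ⟨x, hxE, hpx, hxrel⟩ := hx
    refine ⟨fun j => if j ≤ (n:ℤ) then g j else x, ⟨?_, ?_⟩, ?_, ?_⟩
    · intro i hi
      simp only [mem_Icc] at hi
      by_cases hc : i ≤ (n:ℤ)
      · simp only [hc, if_true]; exact hgmem i ⟨hi.1, hc⟩
      · simp only [hc, if_false]; exact hxE
    · intro i hi j hj hij
      simp only [mem_Icc] at hi hj
      push_cast at hi hj
      rw [adj2, abs_eq (by norm_num : (0:ℤ) ≤ 1)] at hij
      by_cases hci : i ≤ (n:ℤ) <;> by_cases hcj : j ≤ (n:ℤ)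
      · simp only [hci, hcj, if_true]
        exact hgadj i ⟨hi.1, hci⟩ j ⟨hj.1, hcj⟩ (by rw [adj2, abs_eq]; omega; norm_num)
      · have hji : j = (n:ℤ) + 1 ∧ i = (n:ℤ) := by omega
        simp only [hci, hcj, if_true, if_false]
        rw [hji.2]
        exact hxrel.imp (fun h => h.symm) id
      · have hji : i = (n:ℤ) + 1 ∧ j = (n:ℤ) := by omega
        simp only [hci, hcj, if_true, if_false]
        rw [hji.2]
        exact hxrel.imp id (fun h => hκ.1 h)
      · omega
    · intro i hi
      simp only [mem_Icc] at hi
      push_cast at hi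
      by_cases hc : i ≤ (n:ℤ)
      · simp only [hc, if_true]; exact hgp i ⟨hi.1, hc⟩
      · have hi1 : i = (n:ℤ) + 1 := by omega
        subst hi1
        simp only [if_neg hc]
        exact hpx
    · have : (0:ℤ) ≤ (n:ℤ) := by positivity
      simp only [this, if_true, hg0]
end

section
/- Let SC₈^{2,4} = (c_i)_{i∈[0,3]_ℤ} be a simple closed 8-curve with 4 points in ℤ², let ℤ⁺ = {k ∈ ℤ : k ≥ 0} with 2-adjacency, and define h : ℤ⁺ → SC₈^{2,4} by h(i) = c_{i mod 4}. Then h has the uniqueness of digital path lifts property but does not have the digital path lifting property (the 8-path γ : [0,1]_ℤ → SC₈^{2,4} with γ(0) = c₀, γ(1) = c₃ has no lifting beginning at 0 ∈ h⁻¹(c₀)). (Example 3.3) -/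
open Set

/-- Example 3.3: for a simple closed 8-curve `SC₈^{2,4} = (c_i)_{i ∈ [0,3]_ℤ}` in `ℤ²` and
`h : ℤ⁺ → SC₈^{2,4}` given by `h i = c (i mod 4)`, the map `h` has the uniqueness of digital
path lifts property but not the digital path lifting property: the 8-path `γ` with
`γ 0 = c 0`, `γ 1 = c 3` has no lifting beginning at `0 ∈ h⁻¹(c 0)`. -/
theorem example_3_3 (c : ℤ → ℤ × ℤ)
    (hc_inj : ∀ i ∈ Set.Icc (0 : ℤ) 3, ∀ j ∈ Set.Icc (0 : ℤ) 3, c i = c j → i = j)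
    (hc_adj : ∀ i ∈ Set.Icc (0 : ℤ) 3, ∀ j ∈ Set.Icc (0 : ℤ) 3,
      (adj8 (c i) (c j) ↔ (j % 4 = (i + 1) % 4 ∨ j % 4 = (i - 1) % 4)))
    (h : ℤ → ℤ × ℤ) (hh : ∀ i : ℤ, h i = c (i % 4)) :
    UniqLiftsProp h {k : ℤ | 0 ≤ k} adj2 ∧
    ¬ PathLiftingProp h {k : ℤ | 0 ≤ k} (c '' Set.Icc (0 : ℤ) 3) adj2 adj8 ∧
    (∃ γ : ℤ → ℤ × ℤ, IsDigPath (c '' Set.Icc (0 : ℤ) 3) adj8 1 γ ∧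
      γ 0 = c 0 ∧ γ 1 = c 3 ∧
      ¬ ∃ g : ℤ → ℤ, IsDigPath {k : ℤ | 0 ≤ k} adj2 1 g ∧
        (∀ i ∈ Set.Icc (0 : ℤ) 1, h (g i) = γ i) ∧ g 0 = 0) := by

  -- c is injective on residues mod 4
  have hcinj4 : ∀ x y : ℤ, c (x % 4) = c (y % 4) → x % 4 = y % 4 := by
    intro x y hxy
    exact hc_inj _ (by constructor <;> omega) _ (by constructor <;> omega) hxy
  have hadj03 : adj8 (c 0) (c 3) :=
    (hc_adj 0 (by norm_num) 3 (by norm_num)).mpr (by right; decide)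
  have hadj30 : adj8 (c 3) (c 0) :=
    (hc_adj 3 (by norm_num) 0 (by norm_num)).mpr (by left; decide)
  -- Part 3 data
  set γ : ℤ → ℤ × ℤ := fun i => c (if i = 0 then 0 else 3) with hγdef
  have hγpath : IsDigPath (c '' Set.Icc (0 : ℤ) 3) adj8 1 γ := by
    constructor
    · intro i _
      by_cases hi : i = 0 <;> simp [hγdef, hi]
      · exact ⟨0, by norm_num, rfl⟩
      · exact ⟨3, by norm_num, rfl⟩
    · intro i hi j hj hadj
      simp only [Set.mem_Icc, Nat.cast_one] at hi hj
      have habs := (abs_eq (by norm_num : (0:ℤ) ≤ 1)).mp hadj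
      have hij : (i = 0 ∧ j = 1) ∨ (i = 1 ∧ j = 0) := by omega
      rcases hij with ⟨hi0, hj1⟩ | ⟨hi1, hj0⟩
      · subst hi0; subst hj1; right; simpa [hγdef] using hadj03
      · subst hi1; subst hj0; right; simpa [hγdef] using hadj30
  have hγ0 : γ 0 = c 0 := by simp [hγdef]
  have hγ1 : γ 1 = c 3 := by simp [hγdef]
  have hnolift : ¬ ∃ g : ℤ → ℤ, IsDigPath {k : ℤ | 0 ≤ k} adj2 1 g ∧
      (∀ i ∈ Set.Icc (0 : ℤ) 1, h (g i) = γ i) ∧ g 0 = 0 := by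
    rintro ⟨g, hg, hcomm, hg0⟩
    have h0mem : (0 : ℤ) ∈ Set.Icc (0 : ℤ) ((1:ℕ) : ℤ) := by norm_num
    have h1mem : (1 : ℤ) ∈ Set.Icc (0 : ℤ) ((1:ℕ) : ℤ) := by norm_num
    have hadj01 : adj2 (0 : ℤ) 1 := by simp [adj2]
    have hstep := hg.2 0 h0mem 1 h1mem hadj01
    have hpos : (0 : ℤ) ≤ g 1 := hg.1 1 h1mem
    have hval : h (g 1) = γ 1 := hcomm 1 (by norm_num)
    rw [hh, hγ1] at hval
    have hval' : c (g 1 % 4) = c ((3 : ℤ) % 4) := by rw [hval]; norm_num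
    have hmod := hcinj4 _ _ hval'
    rw [hg0] at hstep
    rcases hstep with hstep | hstep
    · omega
    · have := (abs_eq (by norm_num : (0:ℤ) ≤ 1)).mp hstep
      omega
  refine ⟨?_, ?_, γ, hγpath, hγ0, hγ1, hnolift⟩
  · -- uniqueness of lifts
    intro m a b ha hb hab h0
    have key : ∀ n : ℕ, (n : ℤ) ≤ (m : ℤ) → a n = b n := by
      intro n
      induction n with
      | zero => intro _; exact h0
      | succ k ih =>
        intro hk
        have hk1 : ((k : ℤ) + 1) ≤ (m : ℤ) := by push_cast at hk; omega
        have hk' : (k : ℤ) ≤ (m : ℤ) := by omega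
        have hkmem : (k : ℤ) ∈ Set.Icc (0 : ℤ) (m : ℤ) := ⟨Int.natCast_nonneg k, hk'⟩
        have hk1mem : ((k : ℤ) + 1) ∈ Set.Icc (0 : ℤ) (m : ℤ) := ⟨by positivity, hk1⟩
        have hadj : adj2 (k : ℤ) ((k : ℤ) + 1) := by simp [adj2]
        have ha' := ha.2 _ hkmem _ hk1mem hadj
        have hb' := hb.2 _ hkmem _ hk1mem hadj
        have heq := hab _ hk1mem
        rw [hh, hh] at heq
        have hmod := hcinj4 _ _ heq
        have ihk := ih hk'
        have hda : a ((k:ℤ)+1) - a (k:ℤ) = 0 ∨ |a (k:ℤ) - a ((k:ℤ)+1)| = 1 := by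
          rcases ha' with hx | hx
          · left; omega
          · right; exact hx
        have hdb : b ((k:ℤ)+1) - b (k:ℤ) = 0 ∨ |b (k:ℤ) - b ((k:ℤ)+1)| = 1 := by
          rcases hb' with hx | hx
          · left; omega
          · right; exact hx
        have goal : a ((k:ℤ)+1) = b ((k:ℤ)+1) := by
          rcases hda with hx | hx <;> rcases hdb with hy | hy
          · omega
          · have := (abs_eq (by norm_num : (0:ℤ) ≤ 1)).mp hy; omega
          · have := (abs_eq (by norm_num : (0:ℤ) ≤ 1)).mp hx; omega
          · have h1 := (abs_eq (by norm_num : (0:ℤ) ≤ 1)).mp hx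
            have h2 := (abs_eq (by norm_num : (0:ℤ) ≤ 1)).mp hy
            omega
        show a ((k+1 : ℕ) : ℤ) = b ((k+1 : ℕ) : ℤ)
        push_cast
        exact goal
    intro i hi
    simp only [Set.mem_Icc] at hi
    have : i = ((i.toNat : ℕ) : ℤ) := (Int.toNat_of_nonneg hi.1).symm
    rw [this]
    exact key _ (by omega)
  · -- no path lifting property
    intro hP
    have h0E : (0 : ℤ) ∈ {k : ℤ | 0 ≤ k} := by simp [Set.mem_setOf_eq]
    have h00 : h 0 = γ 0 := by rw [hh, hγ0]; norm_num
    obtain ⟨g, hg, hcomm, hg0⟩ := hP 1 γ hγpath 0 h0E h00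
    exact hnolift ⟨g, hg, by intro i hi; exact hcomm i (by simpa using hi), hg0⟩
end
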